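/- arXiv:1602.02607 — 4 statements merged into one kernel-verified Lean document; each statement's English description precedes it below -/
import Mathlib

section
/- Let φ_i, φ_j: [a, a+δ] → ℝ be absolutely continuous with φ_i(a) = φ_j(a) = 0, and suppose ∫_a^{a+r} |φ_k'(s) − φ_k'(a)| ds ≤ ηr for k ∈ {i,j} and all 0 < r < δ. Then for all a < t < a+δ, |∫_a^t (φ_i φ_j' − φ_j φ_i')| ≤ 2η(|φ_i'(a)| + |φ_j'(a)| + η)(t−a)². -/
open MeasureTheory Set

/-- Auxiliary: if `f` is a primitive of `g` on `[a,t]` and the integral of `|g - A|`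
over `[a,t]` is at most `E`, then `|f s - A (s-a)| ≤ E` for all `s ∈ [a,t]`. -/
lemma sa_aux (f g : ℝ → ℝ) (a t A E : ℝ) (hat : a ≤ t)
    (hI : IntegrableOn g (Icc a t))
    (hftc : ∀ s ∈ Icc a t, f s = ∫ u in a..s, g u)
    (hkey : ∫ s in a..t, |g s - A| ≤ E) :
    ∀ s ∈ Icc a t, |f s - A * (s - a)| ≤ E := by
  intro s hs
  have hs1 : a ≤ s := hs.1
  have hs2 : s ≤ t := hs.2
  have hIg : IntervalIntegrable g volume a s := by
    have : IntegrableOn g (uIcc a s) := by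
      rw [uIcc_of_le hs1]; exact hI.mono_set (Icc_subset_Icc le_rfl hs2)
    exact this.intervalIntegrable
  have hIabs : IntervalIntegrable (fun u => |g u - A|) volume a t := by
    have : IntegrableOn (fun u => |g u - A|) (uIcc a t) := by
      rw [uIcc_of_le hat]
      exact (hI.sub (integrableOn_const measure_Icc_lt_top.ne)).abs
    exact this.intervalIntegrable
  have heq : f s - A * (s - a) = ∫ u in a..s, (g u - A) := by
    rw [hftc s hs, intervalIntegral.integral_sub hIg intervalIntegrable_const,
      intervalIntegral.integral_const]
    simp [smul_eq_mul]; ring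
  rw [heq]
  calc |∫ u in a..s, (g u - A)| ≤ ∫ u in a..s, |g u - A| :=
        intervalIntegral.abs_integral_le_integral_abs hs1
    _ ≤ ∫ u in a..t, |g u - A| :=
        intervalIntegral.integral_mono_interval le_rfl hs1 hs2
          (Filter.Eventually.of_forall fun u => abs_nonneg _) hIabs
    _ ≤ E := hkey

/-- Lemma 3.2(2): estimate on the signed area swept out by a planar absolutely continuous
curve near a quantitative Lebesgue point of its derivative. -/
theorem signed_area_estimate (φi φj : ℝ → ℝ) (a δ η : ℝ) (hδ : 0 < δ) (hη : 0 < η)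
    (hφia : φi a = 0) (hφja : φj a = 0)
    (hinti : IntegrableOn (deriv φi) (Icc a (a + δ)))
    (hintj : IntegrableOn (deriv φj) (Icc a (a + δ)))
    (hftci : ∀ t ∈ Icc a (a + δ), φi t = ∫ s in a..t, deriv φi s)
    (hftcj : ∀ t ∈ Icc a (a + δ), φj t = ∫ s in a..t, deriv φj s)
    (hlebi : ∀ r : ℝ, 0 < r → r < δ →
      ∫ s in a..a + r, |deriv φi s - deriv φi a| ≤ η * r)
    (hlebj : ∀ r : ℝ, 0 < r → r < δ →
      ∫ s in a..a + r, |deriv φj s - deriv φj a| ≤ η * r) :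
    ∀ t, a < t → t < a + δ →
      |∫ s in a..t, (φi s * deriv φj s - φj s * deriv φi s)| ≤
        2 * η * (|deriv φi a| + |deriv φj a| + η) * (t - a) ^ 2 := by
  intro t hat htδ
  set Ai := deriv φi a with hAidef
  set Aj := deriv φj a with hAjdef
  have hat' : a ≤ t := hat.le
  have hta : 0 < t - a := sub_pos.mpr hat
  have hsub : Icc a t ⊆ Icc a (a + δ) := Icc_subset_Icc le_rfl htδ.le
  have hIi : IntegrableOn (deriv φi) (Icc a t) := hinti.mono_set hsub
  have hIj : IntegrableOn (deriv φj) (Icc a t) := hintj.mono_set hsub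
  have keyi : ∫ s in a..t, |deriv φi s - Ai| ≤ η * (t - a) := by
    have h := hlebi (t - a) hta (by linarith)
    rwa [show a + (t - a) = t from by ring] at h
  have keyj : ∫ s in a..t, |deriv φj s - Aj| ≤ η * (t - a) := by
    have h := hlebj (t - a) hta (by linarith)
    rwa [show a + (t - a) = t from by ring] at h
  have hbndi : ∀ s ∈ Icc a t, |φi s - Ai * (s - a)| ≤ η * (t - a) :=
    sa_aux φi (deriv φi) a t Ai (η * (t - a)) hat' hIi
      (fun s hs => hftci s (hsub hs)) keyi
  have hbndj : ∀ s ∈ Icc a t, |φj s - Aj * (s - a)| ≤ η * (t - a) :=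
    sa_aux φj (deriv φj) a t Aj (η * (t - a)) hat' hIj
      (fun s hs => hftcj s (hsub hs)) keyj
  have habsmul : ∀ (A : ℝ) (s : ℝ), s ∈ Icc a t → |A * (s - a)| ≤ |A| * (t - a) := by
    intro A s hs
    rw [abs_mul, abs_of_nonneg (by linarith [hs.1] : (0:ℝ) ≤ s - a)]
    exact mul_le_mul_of_nonneg_left (by linarith [hs.2]) (abs_nonneg _)
  have habsi : ∀ s ∈ Icc a t, |φi s| ≤ (|Ai| + η) * (t - a) := by
    intro s hs
    calc |φi s| = |(φi s - Ai * (s - a)) + Ai * (s - a)| := by ring_nf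
      _ ≤ |φi s - Ai * (s - a)| + |Ai * (s - a)| := abs_add_le _ _
      _ ≤ η * (t - a) + |Ai| * (t - a) := add_le_add (hbndi s hs) (habsmul Ai s hs)
      _ = (|Ai| + η) * (t - a) := by ring
  have habsj : ∀ s ∈ Icc a t, |φj s| ≤ (|Aj| + η) * (t - a) := by
    intro s hs
    calc |φj s| = |(φj s - Aj * (s - a)) + Aj * (s - a)| := by ring_nf
      _ ≤ |φj s - Aj * (s - a)| + |Aj * (s - a)| := abs_add_le _ _
      _ ≤ η * (t - a) + |Aj| * (t - a) := add_le_add (hbndj s hs) (habsmul Aj s hs)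
      _ = (|Aj| + η) * (t - a) := by ring
  -- continuity of φi, φj on [a,t]
  have hconti : ContinuousOn φi (Icc a t) := by
    have hprim : ContinuousOn (fun x => ∫ u in a..x, deriv φi u) (Icc a t) := by
      have : IntegrableOn (deriv φi) (uIcc a t) := by rw [uIcc_of_le hat']; exact hIi
      simpa [uIcc_of_le hat'] using intervalIntegral.continuousOn_primitive_interval this
    exact hprim.congr fun s hs => hftci s (hsub hs)
  have hcontj : ContinuousOn φj (Icc a t) := by
    have hprim : ContinuousOn (fun x => ∫ u in a..x, deriv φj u) (Icc a t) := by
      have : IntegrableOn (deriv φj) (uIcc a t) := by rw [uIcc_of_le hat']; exact hIj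
      simpa [uIcc_of_le hat'] using intervalIntegral.continuousOn_primitive_interval this
    exact hprim.congr fun s hs => hftcj s (hsub hs)
  have hmi : AEStronglyMeasurable φi (volume.restrict (Ioc a t)) :=
    (hconti.aestronglyMeasurable measurableSet_Icc).mono_measure
      (Measure.restrict_mono Ioc_subset_Icc_self le_rfl)
  have hmj : AEStronglyMeasurable φj (volume.restrict (Ioc a t)) :=
    (hcontj.aestronglyMeasurable measurableSet_Icc).mono_measure
      (Measure.restrict_mono Ioc_subset_Icc_self le_rfl)
  -- integrability of the four pieces on Ioc a t
  have hgi : IntegrableOn (fun s => deriv φi s - Ai) (Ioc a t) :=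
    (hIi.mono_set Ioc_subset_Icc_self).sub (integrableOn_const measure_Ioc_lt_top.ne)
  have hgj : IntegrableOn (fun s => deriv φj s - Aj) (Ioc a t) :=
    (hIj.mono_set Ioc_subset_Icc_self).sub (integrableOn_const measure_Ioc_lt_top.ne)
  have hf1 : IntegrableOn (fun s => φi s * (deriv φj s - Aj)) (Ioc a t) := by
    refine Integrable.bdd_mul (c := (|Ai| + η) * (t - a)) hgj hmi ?_
    refine (ae_restrict_iff' measurableSet_Ioc).mpr (Filter.Eventually.of_forall fun s hs => ?_)
    simpa [Real.norm_eq_abs] using habsi s (Ioc_subset_Icc_self hs)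
  have hf2 : IntegrableOn (fun s => φj s * (deriv φi s - Ai)) (Ioc a t) := by
    refine Integrable.bdd_mul (c := (|Aj| + η) * (t - a)) hgi hmj ?_
    refine (ae_restrict_iff' measurableSet_Ioc).mpr (Filter.Eventually.of_forall fun s hs => ?_)
    simpa [Real.norm_eq_abs] using habsj s (Ioc_subset_Icc_self hs)
  have hf3 : IntegrableOn (fun s => Aj * (φi s - Ai * (s - a))) (Ioc a t) := by
    have hc : ContinuousOn (fun s => φi s - Ai * (s - a)) (Icc a t) :=
      hconti.sub (Continuous.continuousOn (continuous_const.mul (continuous_id.sub continuous_const)))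
    exact ((hc.integrableOn_Icc).mono_set Ioc_subset_Icc_self).const_mul Aj
  have hf4 : IntegrableOn (fun s => Ai * (φj s - Aj * (s - a))) (Ioc a t) := by
    have hc : ContinuousOn (fun s => φj s - Aj * (s - a)) (Icc a t) :=
      hcontj.sub (Continuous.continuousOn (continuous_const.mul (continuous_id.sub continuous_const)))
    exact ((hc.integrableOn_Icc).mono_set Ioc_subset_Icc_self).const_mul Ai
  have toII : ∀ {h : ℝ → ℝ}, IntegrableOn h (Ioc a t) → IntervalIntegrable h volume a t :=
    fun hInt => (intervalIntegrable_iff_integrableOn_Ioc_of_le hat').mpr hInt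
  have If1 := toII hf1
  have If2 := toII hf2
  have If3 := toII hf3
  have If4 := toII hf4
  -- decompose the integral
  have hsplit : ∫ s in a..t, (φi s * deriv φj s - φj s * deriv φi s) =
      (∫ s in a..t, φi s * (deriv φj s - Aj)) - (∫ s in a..t, φj s * (deriv φi s - Ai)) +
      (∫ s in a..t, Aj * (φi s - Ai * (s - a))) - (∫ s in a..t, Ai * (φj s - Aj * (s - a))) := by
    rw [← intervalIntegral.integral_sub If1 If2,
      ← intervalIntegral.integral_add (If1.sub If2) If3,
      ← intervalIntegral.integral_sub ((If1.sub If2).add If3) If4]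
    apply intervalIntegral.integral_congr
    intro s _
    ring
  -- bound the four pieces
  have b1 : |∫ s in a..t, φi s * (deriv φj s - Aj)| ≤ ((|Ai| + η) * (t - a)) * (η * (t - a)) := by
    calc |∫ s in a..t, φi s * (deriv φj s - Aj)|
        ≤ ∫ s in a..t, |φi s * (deriv φj s - Aj)| :=
          intervalIntegral.abs_integral_le_integral_abs hat'
      _ ≤ ∫ s in a..t, ((|Ai| + η) * (t - a)) * |deriv φj s - Aj| := by
          refine intervalIntegral.integral_mono_on hat' If1.abs ((toII hgj.abs).const_mul _) ?_
          intro s hs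
          rw [abs_mul]
          exact mul_le_mul_of_nonneg_right (habsi s hs) (abs_nonneg _)
      _ = ((|Ai| + η) * (t - a)) * ∫ s in a..t, |deriv φj s - Aj| :=
          intervalIntegral.integral_const_mul _ _
      _ ≤ ((|Ai| + η) * (t - a)) * (η * (t - a)) := by
          refine mul_le_mul_of_nonneg_left keyj ?_
          positivity
  have b2 : |∫ s in a..t, φj s * (deriv φi s - Ai)| ≤ ((|Aj| + η) * (t - a)) * (η * (t - a)) := by
    calc |∫ s in a..t, φj s * (deriv φi s - Ai)|
        ≤ ∫ s in a..t, |φj s * (deriv φi s - Ai)| :=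
          intervalIntegral.abs_integral_le_integral_abs hat'
      _ ≤ ∫ s in a..t, ((|Aj| + η) * (t - a)) * |deriv φi s - Ai| := by
          refine intervalIntegral.integral_mono_on hat' If2.abs ((toII hgi.abs).const_mul _) ?_
          intro s hs
          rw [abs_mul]
          exact mul_le_mul_of_nonneg_right (habsj s hs) (abs_nonneg _)
      _ = ((|Aj| + η) * (t - a)) * ∫ s in a..t, |deriv φi s - Ai| :=
          intervalIntegral.integral_const_mul _ _
      _ ≤ ((|Aj| + η) * (t - a)) * (η * (t - a)) := by
          refine mul_le_mul_of_nonneg_left keyi ?_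
          positivity
  have b3 : |∫ s in a..t, Aj * (φi s - Ai * (s - a))| ≤ (t - a) * (|Aj| * (η * (t - a))) := by
    calc |∫ s in a..t, Aj * (φi s - Ai * (s - a))|
        ≤ ∫ s in a..t, |Aj * (φi s - Ai * (s - a))| :=
          intervalIntegral.abs_integral_le_integral_abs hat'
      _ ≤ ∫ s in a..t, (|Aj| * (η * (t - a)) : ℝ) := by
          refine intervalIntegral.integral_mono_on hat' If3.abs intervalIntegrable_const ?_
          intro s hs
          rw [abs_mul]
          exact mul_le_mul_of_nonneg_left (hbndi s hs) (abs_nonneg _)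
      _ = (t - a) * (|Aj| * (η * (t - a))) := by
          rw [intervalIntegral.integral_const, smul_eq_mul]
  have b4 : |∫ s in a..t, Ai * (φj s - Aj * (s - a))| ≤ (t - a) * (|Ai| * (η * (t - a))) := by
    calc |∫ s in a..t, Ai * (φj s - Aj * (s - a))|
        ≤ ∫ s in a..t, |Ai * (φj s - Aj * (s - a))| :=
          intervalIntegral.abs_integral_le_integral_abs hat'
      _ ≤ ∫ s in a..t, (|Ai| * (η * (t - a)) : ℝ) := by
          refine intervalIntegral.integral_mono_on hat' If4.abs intervalIntegrable_const ?_
          intro s hs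
          rw [abs_mul]
          exact mul_le_mul_of_nonneg_left (hbndj s hs) (abs_nonneg _)
      _ = (t - a) * (|Ai| * (η * (t - a))) := by
          rw [intervalIntegral.integral_const, smul_eq_mul]
  -- combine
  rw [hsplit]
  have htri : ∀ x y z w : ℝ, |x - y + z - w| ≤ |x| + |y| + |z| + |w| := by
    intro x y z w
    calc |x - y + z - w| ≤ |x - y + z| + |w| := abs_sub _ _
      _ ≤ |x - y| + |z| + |w| := by gcongr; exact abs_add_le _ _
      _ ≤ |x| + |y| + |z| + |w| := by gcongr; exact abs_sub _ _
  calc |(∫ s in a..t, φi s * (deriv φj s - Aj)) - (∫ s in a..t, φj s * (deriv φi s - Ai)) +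
      (∫ s in a..t, Aj * (φi s - Ai * (s - a))) - (∫ s in a..t, Ai * (φj s - Aj * (s - a)))|
      ≤ |∫ s in a..t, φi s * (deriv φj s - Aj)| + |∫ s in a..t, φj s * (deriv φi s - Ai)| +
        |∫ s in a..t, Aj * (φi s - Ai * (s - a))| + |∫ s in a..t, Ai * (φj s - Aj * (s - a))| :=
        htri _ _ _ _
    _ ≤ ((|Ai| + η) * (t - a)) * (η * (t - a)) + ((|Aj| + η) * (t - a)) * (η * (t - a)) +
        (t - a) * (|Aj| * (η * (t - a))) + (t - a) * (|Ai| * (η * (t - a))) := by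
        exact add_le_add (add_le_add (add_le_add b1 b2) b3) b4
    _ = 2 * η * (|Ai| + |Aj| + η) * (t - a) ^ 2 := by ring
end

section
/- Let φ: [a,b] → ℝʳ be absolutely continuous, p ∈ ℝⁿ (n = r + r(r−1)/2) with (p_1,...,p_r) = φ(a). Define γ: [a,b] → ℝⁿ by γ_i = φ_i for 1 ≤ i ≤ r and γ_{ij}(t) = p_{ij} + (1/2)∫_a^t (φ_i φ_j' − φ_j φ_i') for 1 ≤ j < i ≤ r. Then γ is an absolutely continuous horizontal curve in the free step-2 Carnot group G_r with γ(a) = p. Moreover if φ is C¹ then γ is C¹. -/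
open MeasureTheory Set Filter Metric Topology

lemma ae_hasDerivAt_primitive {g : ℝ → ℝ} (hg : Integrable g) (a : ℝ) :
    ∀ᵐ t ∂(volume : Measure ℝ), HasDerivAt (fun u => ∫ s in a..u, g s) (g t) t := by
  filter_upwards [IsUnifLocDoublingMeasure.ae_tendsto_average_norm_sub
    (μ := (volume : Measure ℝ)) hg.locallyIntegrable 1] with t ht
  rw [hasDerivAt_iff_tendsto_slope]
  set A : ℝ → ℝ := fun u => ⨍ y in closedBall t |u - t|, ‖g y - g t‖ with hA_def
  have hA : Tendsto A (𝓝[≠] t) (𝓝 0) := by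
    apply ht (fun _ => t) (fun u => |u - t|)
    · rw [tendsto_nhdsWithin_iff]
      constructor
      · have h2 : Tendsto (fun u : ℝ => |u - t|) (𝓝 t) (𝓝 |t - t|) :=
          (continuous_abs.comp (continuous_id.sub continuous_const)).tendsto t
        simpa using h2.mono_left nhdsWithin_le_nhds
      · filter_upwards [self_mem_nhdsWithin] with u hu
        exact abs_pos.2 (sub_ne_zero.2 hu)
    · filter_upwards [self_mem_nhdsWithin] with u _
      simp [Metric.mem_closedBall, dist_self, abs_nonneg]
  have key : ∀ᶠ u in 𝓝[≠] t,
      ‖slope (fun u => ∫ s in a..u, g s) t u - g t‖ ≤ 2 * A u := by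
    filter_upwards [self_mem_nhdsWithin] with u hu
    have hut : (u : ℝ) ≠ t := hu
    have h1 : (0:ℝ) < |u - t| := abs_pos.2 (sub_ne_zero.2 hut)
    have hii : ∀ c d : ℝ, IntervalIntegrable g volume c d := fun c d => hg.intervalIntegrable
    have hFt : (∫ s in a..u, g s) - (∫ s in a..t, g s) = ∫ s in t..u, g s := by
      rw [← intervalIntegral.integral_add_adjacent_intervals (hii a t) (hii t u)]
      ring
    have hsub : (∫ s in t..u, (g s - g t)) = (∫ s in t..u, g s) - (u - t) * g t := by
      rw [intervalIntegral.integral_sub (hii t u) intervalIntegrable_const,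
        intervalIntegral.integral_const, smul_eq_mul]
    have hslope : slope (fun u => ∫ s in a..u, g s) t u - g t
        = (u - t)⁻¹ * (∫ s in t..u, (g s - g t)) := by
      rw [slope_def_field, hFt, hsub, mul_sub, ← mul_assoc,
        inv_mul_cancel₀ (sub_ne_zero.2 hut), one_mul, div_eq_inv_mul]
    have hball : Set.uIoc t u ⊆ closedBall t |u - t| := by
      rw [Real.closedBall_eq_Icc]
      intro y hy
      rw [Set.mem_uIoc] at hy
      rcases hy with ⟨hy1, hy2⟩ | ⟨hy1, hy2⟩ <;> rcases abs_cases (u - t) with ⟨h, _⟩ | ⟨h, _⟩ <;>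
        exact ⟨by linarith, by linarith⟩
    have hInt : IntegrableOn (fun y => ‖g y - g t‖) (closedBall t |u - t|) volume :=
      (hg.integrableOn.sub (integrableOn_const measure_closedBall_lt_top.ne)).norm
    have hmono : (∫ y in Set.uIoc t u, ‖g y - g t‖) ≤ ∫ y in closedBall t |u - t|, ‖g y - g t‖ :=
      setIntegral_mono_set hInt (Eventually.of_forall fun y => norm_nonneg _)
        (HasSubset.Subset.eventuallyLE hball)
    have hμ : ((volume : Measure ℝ) (closedBall t |u - t|)).toReal = 2 * |u - t| := by
      rw [Real.volume_closedBall, ENNReal.toReal_ofReal (by positivity)]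
    have havg : (∫ y in closedBall t |u - t|, ‖g y - g t‖) = 2 * |u - t| * A u := by
      rw [hA_def]
      simp only [setAverage_eq, smul_eq_mul, measureReal_def, hμ]
      rw [← mul_assoc, mul_inv_cancel₀ (by positivity), one_mul]
    calc ‖slope (fun u => ∫ s in a..u, g s) t u - g t‖
        = |u - t|⁻¹ * |∫ s in t..u, (g s - g t)| := by
          rw [hslope, Real.norm_eq_abs, abs_mul, abs_inv]
      _ ≤ |u - t|⁻¹ * (2 * |u - t| * A u) := by
          apply mul_le_mul_of_nonneg_left _ (by positivity)
          rw [← havg]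
          refine le_trans ?_ hmono
          simpa [Real.norm_eq_abs] using
            intervalIntegral.norm_integral_le_integral_norm_uIoc (f := fun s => g s - g t)
              (a := t) (b := u) (μ := volume)
      _ = 2 * A u := by field_simp
  have h0 : Tendsto (fun u => slope (fun u => ∫ s in a..u, g s) t u - g t) (𝓝[≠] t) (𝓝 0) :=
    squeeze_zero_norm' key (by simpa using hA.const_mul 2)
  have h2 := h0.add (tendsto_const_nhds :
    Tendsto (fun _ : ℝ => g t) (𝓝[≠] t) (𝓝 (g t)))
  simpa using h2

/-- The underlying space of the free step-2 Carnot group `G_r`. -/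
abbrev CarnotPt (r : ℕ) := (Fin r → ℝ) × ({p : Fin r × Fin r // p.2 < p.1} → ℝ)

/-- The horizontal vector fields
`X_k = ∂_k + Σ_{j>k} (x_j/2) ∂_{jk} − Σ_{j<k} (x_j/2) ∂_{kj}`. -/
noncomputable def Xh {r : ℕ} (k : Fin r) (x : CarnotPt r) : CarnotPt r :=
  (Pi.single k 1,
   fun p => if p.1.2 = k then x.1 p.1.1 / 2
            else if p.1.1 = k then -(x.1 p.1.2) / 2 else 0)

/-- The horizontal lift of an absolutely continuous curve `φ : [a,b] → ℝʳ` starting at a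
point `p` with `(p_1,…,p_r) = φ(a)` is an absolutely continuous horizontal curve in `G_r`
starting at `p`; it is `C¹` whenever `φ` is `C¹`. -/
theorem horizontal_lift (r : ℕ) (hr : 2 ≤ r) (a b : ℝ) (hab : a < b)
    (φ f : ℝ → Fin r → ℝ) (p : CarnotPt r) (hpa : p.1 = φ a)
    (hint : IntegrableOn f (Icc a b))
    (hderiv : ∀ᵐ t ∂(volume.restrict (Icc a b)), HasDerivAt φ (f t) t)
    (hftc : ∀ t₁ ∈ Icc a b, ∀ t₂ ∈ Icc a b, φ t₂ = φ t₁ + ∫ t in t₁..t₂, f t)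
    (γ : ℝ → CarnotPt r)
    (hγ : ∀ t, γ t = (φ t,
      fun q => p.2 q + (1 / 2) * ∫ s in a..t,
        (φ s q.1.1 * f s q.1.2 - φ s q.1.2 * f s q.1.1))) :
    γ a = p ∧
    (∃ G : ℝ → CarnotPt r, IntegrableOn G (Icc a b) ∧
      (∀ᵐ t ∂(volume.restrict (Icc a b)), HasDerivAt γ (G t) t) ∧
      (∀ t₁ ∈ Icc a b, ∀ t₂ ∈ Icc a b, γ t₂ = γ t₁ + ∫ t in t₁..t₂, G t) ∧
      (∀ᵐ t ∂(volume.restrict (Icc a b)), ∃ c : Fin r → ℝ,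
        G t = ∑ k, c k • Xh k (γ t))) ∧
    ((∀ t, HasDerivAt φ (f t) t) → Continuous f → ContDiff ℝ 1 γ) := by
  have ha : a ∈ Icc a b := ⟨le_refl a, hab.le⟩
  have hb : b ∈ Icc a b := ⟨hab.le, le_refl b⟩
  set ι := {q : Fin r × Fin r // q.2 < q.1} with hι
  set g : ι → ℝ → ℝ :=
    fun q s => φ s q.1.1 * f s q.1.2 - φ s q.1.2 * f s q.1.1 with hg_def
  set ψ : ℝ → ι → ℝ := fun t q => p.2 q + (1 / 2) * ∫ s in a..t, g q s with hψ_def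
  have hγ' : γ = fun t => (φ t, ψ t) := funext fun t => hγ t
  -- continuity of φ on `Icc a b`
  have hφc : ContinuousOn φ (Icc a b) := by
    have h1 : ContinuousOn (fun t => φ a + ∫ s in a..t, f s) (Icc a b) := by
      apply ContinuousOn.add continuousOn_const
      have := intervalIntegral.continuousOn_primitive_interval (a := a) (b := b) (μ := volume) (f := f)
        (by rwa [uIcc_of_le hab.le])
      rwa [uIcc_of_le hab.le] at this
    exact h1.congr fun t ht => (hftc a ha t ht).symm ▸ rfl
  obtain ⟨C, hC⟩ := isCompact_Icc.exists_bound_of_continuousOn hφc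
  have hC0 : 0 ≤ C := le_trans (norm_nonneg _) (hC a ha)
  have hφm : AEStronglyMeasurable φ (volume.restrict (Icc a b)) :=
    hφc.aestronglyMeasurable measurableSet_Icc
  have hfm : AEStronglyMeasurable f (volume.restrict (Icc a b)) := hint.aestronglyMeasurable
  -- integrability of the products
  have hmul : ∀ i j : Fin r, IntegrableOn (fun t => φ t i * f t j) (Icc a b) := by
    intro i j
    apply (hint.norm.const_mul C).mono'
    · exact ((continuous_apply i).comp_aestronglyMeasurable hφm).mul
        ((continuous_apply j).comp_aestronglyMeasurable hfm)
    · filter_upwards [ae_restrict_mem measurableSet_Icc] with t ht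
      have h1 : |φ t i| ≤ C := le_trans (norm_le_pi_norm (φ t) i) (hC t ht)
      have h2 : |f t j| ≤ ‖f t‖ := norm_le_pi_norm (f t) j
      calc ‖φ t i * f t j‖ = |φ t i| * |f t j| := abs_mul _ _
        _ ≤ C * ‖f t‖ := mul_le_mul h1 h2 (abs_nonneg _) hC0
  have hgi : ∀ q : ι, IntegrableOn (g q) (Icc a b) := fun q =>
    (hmul q.1.1 q.1.2).sub (hmul q.1.2 q.1.1)
  -- a.e. differentiability of the primitives
  have hprim : ∀ q : ι, ∀ᵐ t ∂(volume.restrict (Icc a b)),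
      HasDerivAt (fun u => ∫ s in a..u, g q s) (g q t) t := by
    intro q
    have hind : Integrable ((Icc a b).indicator (g q)) :=
      (integrable_indicator_iff measurableSet_Icc).2 (hgi q)
    have h1 := ae_hasDerivAt_primitive hind a
    have hIoo : volume.restrict (Icc a b) = volume.restrict (Ioo a b) :=
      (Measure.restrict_congr_set Ioo_ae_eq_Icc).symm
    rw [hIoo]
    filter_upwards [ae_restrict_of_ae h1, ae_restrict_mem measurableSet_Ioo] with t h1t hIt
    have heq : (fun u => ∫ s in a..u, g q s)
        =ᶠ[𝓝 t] (fun u => ∫ s in a..u, (Icc a b).indicator (g q) s) := by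
      filter_upwards [Ioo_mem_nhds hIt.1 hIt.2] with u hu
      apply intervalIntegral.integral_congr
      intro x hx
      rw [uIcc_of_le hu.1.le] at hx
      exact (Set.indicator_of_mem (show x ∈ Icc a b from ⟨hx.1, hx.2.trans hu.2.le⟩)
        (g q)).symm
    have hval : (Icc a b).indicator (g q) t = g q t :=
      indicator_of_mem (Ioo_subset_Icc_self hIt) _
    exact (hval ▸ h1t).congr_of_eventuallyEq heq
  classical
  -- the candidate derivative
  set G : ℝ → CarnotPt r := fun t => (f t, fun q : ι => (1 / 2) * g q t) with hG_def
  have hsnd_int : IntegrableOn (fun t => fun q : ι => (1 / 2) * g q t) (Icc a b) := by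
    have heq : (fun t => fun q : ι => (1 / 2) * g q t)
        = fun t => ∑ q : ι, Pi.single q ((1 / 2) * g q t) := by
      funext t
      exact (Finset.univ_sum_single _).symm
    rw [heq]
    apply integrable_finset_sum
    intro q _
    exact (LinearMap.toContinuousLinearMap
      (LinearMap.single ℝ (fun _ : ι => ℝ) q)).integrable_comp ((hgi q).const_mul _)
  have hGi : IntegrableOn G (Icc a b) := hint.prodMk hsnd_int
  -- a.e. differentiability of γ
  have hae : ∀ᵐ t ∂(volume.restrict (Icc a b)), HasDerivAt γ (G t) t := by
    have hall : ∀ᵐ t ∂(volume.restrict (Icc a b)), ∀ q : ι,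
        HasDerivAt (fun u => ∫ s in a..u, g q s) (g q t) t := ae_all_iff.2 hprim
    filter_upwards [hderiv, hall] with t h1 h2
    rw [hγ']
    exact h1.prodMk (hasDerivAt_pi.2 fun q => ((h2 q).const_mul (1 / 2)).const_add (p.2 q))
  -- γ starts at p
  have hstart : γ a = p := by
    rw [hγ']
    have h2 : ψ a = p.2 := by
      funext q
      simp [hψ_def, intervalIntegral.integral_same]
    exact Prod.ext_iff.2 ⟨hpa.symm, h2⟩
  -- the horizontality identity
  have hsum : ∀ t, (∑ k, f t k • Xh k (γ t)) = G t := by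
    intro t
    have hfst : (γ t).1 = φ t := by rw [hγ']
    apply Prod.ext_iff.2
    constructor
    · rw [Prod.fst_sum]
      funext i
      simp only [Xh, Prod.smul_fst, Finset.sum_apply, Pi.smul_apply, smul_eq_mul,
        Pi.single_apply, mul_ite, mul_one, mul_zero]
      simp [Finset.sum_ite_eq, hG_def]
    · rw [Prod.snd_sum]
      funext q
      have hne : q.1.1 ≠ q.1.2 := ne_of_gt q.2
      simp only [Xh, Prod.smul_snd, Finset.sum_apply, Pi.smul_apply, smul_eq_mul, hfst]
      have hterm : ∀ k : Fin r,
          f t k * (if q.1.2 = k then φ t q.1.1 / 2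
            else if q.1.1 = k then -(φ t q.1.2) / 2 else 0)
          = (if q.1.2 = k then f t k * (φ t q.1.1 / 2) else 0)
            + (if q.1.1 = k then f t k * (-(φ t q.1.2) / 2) else 0) := by
        intro k
        by_cases h2 : q.1.2 = k
        · have h3 : ¬(q.1.1 = k) := fun h => hne (h.trans h2.symm)
          simp [h2, h3]
        · by_cases h3 : q.1.1 = k <;> simp [h2, h3]
      rw [Finset.sum_congr rfl fun k _ => hterm k, Finset.sum_add_distrib,
        Finset.sum_ite_eq, Finset.sum_ite_eq]
      simp only [Finset.mem_univ, if_true]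
      show _ = (1 / 2) * g q t
      rw [hg_def]
      ring
  refine ⟨hstart, ⟨G, hGi, hae, ?_, ?_⟩, ?_⟩
  · -- FTC for γ
    intro t₁ h₁ t₂ h₂
    have hGII : IntervalIntegrable G volume t₁ t₂ :=
      (hGi.mono_set (uIcc_subset_Icc h₁ h₂)).intervalIntegrable
    have hII : ∀ q : ι, ∀ s₁ ∈ Icc a b, ∀ s₂ ∈ Icc a b,
        IntervalIntegrable (g q) volume s₁ s₂ := fun q s₁ hs₁ s₂ hs₂ =>
      ((hgi q).mono_set (uIcc_subset_Icc hs₁ hs₂)).intervalIntegrable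
    have hfst : (∫ t in t₁..t₂, G t).1 = ∫ t in t₁..t₂, f t := by
      have h := (ContinuousLinearMap.fst ℝ (Fin r → ℝ) (ι → ℝ)).intervalIntegral_comp_comm hGII
      simpa using h.symm
    have hsndq : ∀ q : ι, (∫ t in t₁..t₂, G t).2 q = (1 / 2) * ∫ t in t₁..t₂, g q t := by
      intro q
      have h := ((ContinuousLinearMap.proj (R := ℝ) (φ := fun _ : ι => ℝ) q).comp
        (ContinuousLinearMap.snd ℝ (Fin r → ℝ) (ι → ℝ))).intervalIntegral_comp_comm hGII
      simp only [ContinuousLinearMap.coe_comp', Function.comp_apply,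
        ContinuousLinearMap.coe_snd', ContinuousLinearMap.proj_apply] at h
      rw [← h, intervalIntegral.integral_const_mul]
    rw [hγ']
    apply Prod.ext_iff.2
    constructor
    · show φ t₂ = φ t₁ + (∫ t in t₁..t₂, G t).1
      rw [hfst]
      exact hftc t₁ h₁ t₂ h₂
    · show ψ t₂ = ψ t₁ + (∫ t in t₁..t₂, G t).2
      funext q
      show ψ t₂ q = ψ t₁ q + (∫ t in t₁..t₂, G t).2 q
      have hadj : (∫ s in a..t₁, g q s) + ∫ s in t₁..t₂, g q s = ∫ s in a..t₂, g q s :=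
        intervalIntegral.integral_add_adjacent_intervals (hII q a ha t₁ h₁) (hII q t₁ h₁ t₂ h₂)
      rw [hsndq q, hψ_def]
      simp only
      rw [← hadj]
      ring
  · -- horizontality
    filter_upwards with t
    exact ⟨f t, (hsum t).symm⟩
  · -- the C¹ statement
    intro hφ' hf
    have hφcont : Continuous φ := continuous_iff_continuousAt.2 fun t => (hφ' t).continuousAt
    have hgc : ∀ q : ι, Continuous (g q) := fun q =>
      (((continuous_apply _).comp hφcont).mul ((continuous_apply _).comp hf)).sub
        (((continuous_apply _).comp hφcont).mul ((continuous_apply _).comp hf))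
    have hψd : ∀ t, HasDerivAt ψ (fun q : ι => (1 / 2) * g q t) t := by
      intro t
      apply hasDerivAt_pi.2
      intro q
      have h1 : HasDerivAt (fun u => ∫ s in a..u, g q s) (g q t) t :=
        intervalIntegral.integral_hasDerivAt_right ((hgc q).intervalIntegrable a t)
          ((hgc q).stronglyMeasurable.stronglyMeasurableAtFilter) (hgc q).continuousAt
      exact (h1.const_mul (1 / 2)).const_add (p.2 q)
    have hγd : ∀ t, HasDerivAt γ ((f t, fun q : ι => (1 / 2) * g q t) : CarnotPt r) t := by
      intro t
      rw [hγ']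
      exact (hφ' t).prodMk (hψd t)
    rw [contDiff_one_iff_deriv]
    constructor
    · exact fun t => (hγd t).differentiableAt
    · have hd : deriv γ = fun t => ((f t, fun q : ι => (1 / 2) * g q t) : CarnotPt r) :=
        funext fun t => (hγd t).deriv
      rw [hd]
      exact hf.prodMk (continuous_pi fun q => continuous_const.mul (hgc q))
end

section
/- Let h > 0, ε > 0, Q, V, W ∈ ℝʳ with |V − W| ≤ rε and |Q + 2hV| ≤ 2rεh. Define c̃(t) = Q + tW + (t²/h²)(−4hV − 2hW − 3Q) + (t³/h³)(3hV + hW + 2Q) on [0,h]. Then there is a constant C depending only on r (not on h, ε, Q, V, W) such that |c̃'(t) − V| ≤ Cε for all t ∈ [0,h]. -/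
open Set

/-- The velocity of the cubic Hermite interpolation curve stays `Cε`-close to `V` when the
data are `ε`-compatible; the constant `C` depends only on `r`. -/
theorem cubic_interpolation_velocity_bound (r : ℕ) :
    ∃ C : ℝ, 0 < C ∧
      ∀ (h ε : ℝ), 0 < h → 0 < ε →
      ∀ Q V W : EuclideanSpace ℝ (Fin r),
        ‖V - W‖ ≤ r * ε → ‖Q + (2 * h) • V‖ ≤ 2 * r * ε * h →
      ∀ c : ℝ → EuclideanSpace ℝ (Fin r),
        (∀ t, c t = Q + t • W
          + (t ^ 2 / h ^ 2) • (-((4 * h) • V) - (2 * h) • W - 3 • Q)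
          + (t ^ 3 / h ^ 3) • ((3 * h) • V + h • W + 2 • Q)) →
      ∀ t ∈ Icc (0:ℝ) h, ∀ v : EuclideanSpace ℝ (Fin r),
        HasDerivAt c v t → ‖v - V‖ ≤ C * ε := by
  refine ⟨32 * r + 1, by positivity, ?_⟩
  intro h ε hh hε Q V W hVW hQ c hc t ht v hv
  obtain ⟨ht0, ht1⟩ := ht
  set A : EuclideanSpace ℝ (Fin r) := -((4 * h) • V) - (2 * h) • W - 3 • Q with hAdef
  set B : EuclideanSpace ℝ (Fin r) := (3 * h) • V + h • W + 2 • Q with hBdef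
  have hceq : c = fun s : ℝ => Q + s • W + (s ^ 2 / h ^ 2) • A + (s ^ 3 / h ^ 3) • B :=
    funext hc
  subst hceq
  have hd : HasDerivAt (fun s : ℝ => Q + s • W + (s ^ 2 / h ^ 2) • A + (s ^ 3 / h ^ 3) • B)
      (W + (2 * t / h ^ 2) • A + (3 * t ^ 2 / h ^ 3) • B) t := by
    have := (((hasDerivAt_const t Q).add ((hasDerivAt_id t).smul_const W)).add
        (((hasDerivAt_pow 2 t).div_const (h ^ 2)).smul_const A)).add
        (((hasDerivAt_pow 3 t).div_const (h ^ 3)).smul_const B)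
    convert this using 2 <;> first | rfl | simp [pow_one]
  obtain rfl : v = W + (2 * t / h ^ 2) • A + (3 * t ^ 2 / h ^ 3) • B := hv.unique hd
  -- norm bounds on A and B
  have hWV : ‖W - V‖ ≤ r * ε := by rwa [norm_sub_rev]
  have hA : ‖A‖ ≤ 8 * r * ε * h := by
    have hArw : A = (-(2 * h)) • (W - V) + (-3 : ℝ) • (Q + (2 * h) • V) := by
      rw [hAdef]; push_cast [Nat.cast_smul_eq_nsmul]; module
    calc ‖A‖ ≤ ‖(-(2 * h)) • (W - V)‖ + ‖(-3 : ℝ) • (Q + (2 * h) • V)‖ := by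
          rw [hArw]; exact norm_add_le _ _
      _ = (2 * h) * ‖W - V‖ + 3 * ‖Q + (2 * h) • V‖ := by
          rw [norm_smul, norm_smul]
          simp [abs_of_pos hh, abs_of_nonneg, mul_comm]
      _ ≤ (2 * h) * (r * ε) + 3 * (2 * r * ε * h) := by
          gcongr
      _ = 8 * r * ε * h := by ring
  have hB : ‖B‖ ≤ 5 * r * ε * h := by
    have hBrw : B = h • (W - V) + (2 : ℝ) • (Q + (2 * h) • V) := by
      rw [hBdef]; push_cast [Nat.cast_smul_eq_nsmul]; module
    calc ‖B‖ ≤ ‖h • (W - V)‖ + ‖(2 : ℝ) • (Q + (2 * h) • V)‖ := by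
          rw [hBrw]; exact norm_add_le _ _
      _ = h * ‖W - V‖ + 2 * ‖Q + (2 * h) • V‖ := by
          rw [norm_smul, norm_smul]
          simp [abs_of_pos hh]
      _ ≤ h * (r * ε) + 2 * (2 * r * ε * h) := by gcongr
      _ = 5 * r * ε * h := by ring
  have hsplit : W + (2 * t / h ^ 2) • A + (3 * t ^ 2 / h ^ 3) • B - V
      = (W - V) + (2 * t / h ^ 2) • A + (3 * t ^ 2 / h ^ 3) • B := by abel
  have ha0 : (0:ℝ) ≤ 2 * t / h ^ 2 := by positivity
  have hb0 : (0:ℝ) ≤ 3 * t ^ 2 / h ^ 3 := by positivity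
  have e1 : 2 * t / h ^ 2 * ‖A‖ ≤ 16 * r * ε := by
    rw [div_mul_eq_mul_div, div_le_iff₀ (by positivity : (0:ℝ) < h ^ 2)]
    calc 2 * t * ‖A‖ ≤ 2 * h * (8 * r * ε * h) := by gcongr
      _ = 16 * r * ε * h ^ 2 := by ring
  have e2 : 3 * t ^ 2 / h ^ 3 * ‖B‖ ≤ 15 * r * ε := by
    rw [div_mul_eq_mul_div, div_le_iff₀ (by positivity : (0:ℝ) < h ^ 3)]
    calc 3 * t ^ 2 * ‖B‖ ≤ 3 * h ^ 2 * (5 * r * ε * h) := by gcongr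
      _ = 15 * r * ε * h ^ 3 := by ring
  calc ‖W + (2 * t / h ^ 2) • A + (3 * t ^ 2 / h ^ 3) • B - V‖
      ≤ ‖W - V‖ + ‖(2 * t / h ^ 2) • A‖ + ‖(3 * t ^ 2 / h ^ 3) • B‖ := by
        rw [hsplit]
        exact (norm_add_le _ _).trans (by gcongr; exact norm_add_le _ _)
    _ = ‖W - V‖ + 2 * t / h ^ 2 * ‖A‖ + 3 * t ^ 2 / h ^ 3 * ‖B‖ := by
        rw [norm_smul, norm_smul, Real.norm_eq_abs, Real.norm_eq_abs,
          abs_of_nonneg ha0, abs_of_nonneg hb0]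
    _ ≤ r * ε + 16 * r * ε + 15 * r * ε := by linarith [hWV, e1, e2]
    _ ≤ (32 * r + 1) * ε := by nlinarith
end

section
/- Let γ: [m,M] → ℝⁿ be continuous, K ⊂ [m,M] compact with m, M ∈ K, [m,M]\K = ⋃_l (a_l, b_l), a_l, b_l ∈ K. Suppose γ is differentiable at every point of K with γ'|_K continuous on K, and for each l there are C¹ curves ψ_l: [a_l, b_l] → ℝⁿ with ψ_l(a_l) = γ(a_l), ψ_l(b_l) = γ(b_l), ψ_l'(a_l) = γ'(a_l), ψ_l'(b_l) = γ'(b_l), and sup_{[a_l,b_l]} |ψ_l' − γ'(a_l)| ≤ Cε_l where ε_l → 0. Define Γ = γ on K and Γ = ψ_l on (a_l, b_l). Then Γ is C¹ on [m,M] with Γ' = γ' on K and Γ' = ψ_l' on (a_l, b_l). -/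
open Set Filter

lemma seg_est {E : Type*} [NormedAddCommGroup E] [NormedSpace ℝ E]
    (ψ : ℝ → E) (hψ : ContDiff ℝ 1 ψ) (p q : ℝ) (v : E) (c : ℝ)
    (hb : ∀ u ∈ Icc p q, ‖deriv ψ u - v‖ ≤ c)
    (p' q' : ℝ) (h1 : p ≤ p') (h2 : p' ≤ q') (h3 : q' ≤ q) :
    ‖ψ q' - ψ p' - (q' - p') • v‖ ≤ c * (q' - p') := by
  have hd : ∀ u ∈ Icc p q, HasDerivWithinAt (fun u => ψ u - u • v) (deriv ψ u - v) (Icc p q) u := by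
    intro u hu
    have h1 : HasDerivAt ψ (deriv ψ u) u :=
      ((hψ.differentiable one_ne_zero) u).hasDerivAt
    have h2 : HasDerivAt (fun y : ℝ => y • v) ((1:ℝ) • v) u :=
      (hasDerivAt_id u).smul_const v
    rw [one_smul] at h2
    exact (h1.sub h2).hasDerivWithinAt
  have := Convex.norm_image_sub_le_of_norm_hasDerivWithin_le hd hb (convex_Icc p q)
    ⟨h1, h2.trans h3⟩ ⟨h1.trans h2, h3⟩
  have heq : ψ q' - q' • v - (ψ p' - p' • v) = ψ q' - ψ p' - (q' - p') • v := by
    rw [sub_smul]; abel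
  rw [heq] at this
  calc ‖ψ q' - ψ p' - (q' - p') • v‖ ≤ c * ‖q' - p'‖ := this
    _ = c * (q' - p') := by rw [Real.norm_eq_abs, abs_of_nonneg (by linarith)]


set_option maxHeartbeats 1600000 in
/-- Gluing lemma: the curve obtained from `γ` on a compact set `K` and interpolating `C¹`
curves `ψₗ` on the complementary intervals `(aₗ, bₗ)` is `C¹` on `[m,M]`, with derivative
`γ'` on `K` and `ψₗ'` on `(aₗ, bₗ)`. -/
theorem glued_curve_C1 {n : ℕ} (m M : ℝ) (hmM : m < M)
    (K : Set ℝ) (hK : IsCompact K) (hKsub : K ⊆ Icc m M) (hm : m ∈ K) (hM : M ∈ K)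
    (a b : ℕ → ℝ) (hab : ∀ l, a l < b l)
    (haK : ∀ l, a l ∈ K) (hbK : ∀ l, b l ∈ K)
    (hdisj : Pairwise (Function.onFun Disjoint (fun l => Ioo (a l) (b l))))
    (hcover : (⋃ l, Ioo (a l) (b l)) = Icc m M \ K)
    (γ : ℝ → EuclideanSpace ℝ (Fin n)) (hγcont : ContinuousOn γ (Icc m M))
    (g : ℝ → EuclideanSpace ℝ (Fin n))
    (hγdiff : ∀ t ∈ K, HasDerivWithinAt γ (g t) (Icc m M) t)
    (hgcont : ContinuousOn g K)
    (ψ : ℕ → ℝ → EuclideanSpace ℝ (Fin n)) (hψC1 : ∀ l, ContDiff ℝ 1 (ψ l))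
    (hψa : ∀ l, ψ l (a l) = γ (a l)) (hψb : ∀ l, ψ l (b l) = γ (b l))
    (hψ'a : ∀ l, deriv (ψ l) (a l) = g (a l)) (hψ'b : ∀ l, deriv (ψ l) (b l) = g (b l))
    (C : ℝ) (hC : 0 ≤ C) (ε : ℕ → ℝ) (hε : Tendsto ε atTop (nhds 0))
    (hψclose : ∀ l, ∀ t ∈ Icc (a l) (b l), ‖deriv (ψ l) t - g (a l)‖ ≤ C * ε l)
    (Γ : ℝ → EuclideanSpace ℝ (Fin n))
    (hΓK : ∀ t ∈ K, Γ t = γ t)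
    (hΓψ : ∀ l, ∀ t ∈ Ioo (a l) (b l), Γ t = ψ l t) :
    ∃ G : ℝ → EuclideanSpace ℝ (Fin n), ContinuousOn G (Icc m M) ∧
      (∀ t ∈ Icc m M, HasDerivWithinAt Γ (G t) (Icc m M) t) ∧
      (∀ t ∈ K, G t = g t) ∧
      (∀ l, ∀ t ∈ Ioo (a l) (b l), G t = deriv (ψ l) t) := by
  classical
  -- basic facts
  have hIccsub : ∀ l, Ioo (a l) (b l) ⊆ Icc m M \ K := by
    intro l; rw [← hcover]; exact subset_iUnion (fun l => Ioo (a l) (b l)) l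
  have huniq : ∀ {l l' : ℕ} {t : ℝ}, t ∈ Ioo (a l) (b l) → t ∈ Ioo (a l') (b l') → l = l' := by
    intro l l' t ht ht'
    by_contra hne
    exact Set.disjoint_left.mp (hdisj hne) ht ht'
  have ha_inj : ∀ l l', a l = a l' → l = l' := by
    intro l l' h
    by_contra hne
    set y := (a l + min (b l) (b l')) / 2 with hy
    have hmin : a l < min (b l) (b l') := lt_min (hab l) (h ▸ hab l')
    have hya : a l < y := by simp only [hy]; linarith
    have hym : y < min (b l) (b l') := by simp only [hy]; linarith
    have h1 : y ∈ Ioo (a l) (b l) := ⟨hya, hym.trans_le (min_le_left _ _)⟩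
    have h2 : y ∈ Ioo (a l') (b l') := ⟨h ▸ hya, hym.trans_le (min_le_right _ _)⟩
    exact Set.disjoint_left.mp (hdisj hne) h1 h2
  have hb_inj : ∀ l l', b l = b l' → l = l' := by
    intro l l' h
    by_contra hne
    set y := (max (a l) (a l') + b l) / 2 with hy
    have hmax : max (a l) (a l') < b l := max_lt (hab l) (h ▸ hab l')
    have hyb : y < b l := by simp only [hy]; linarith
    have hym : max (a l) (a l') < y := by simp only [hy]; linarith
    have h1 : y ∈ Ioo (a l) (b l) := ⟨(le_max_left _ _).trans_lt hym, hyb⟩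
    have h2 : y ∈ Ioo (a l') (b l') := ⟨(le_max_right _ _).trans_lt hym, h ▸ hyb⟩
    exact Set.disjoint_left.mp (hdisj hne) h1 h2
  -- the glued derivative
  set G : ℝ → EuclideanSpace ℝ (Fin n) :=
    fun t => if h : ∃ l, t ∈ Ioo (a l) (b l) then deriv (ψ h.choose) t else g t with hGdef
  have hGK : ∀ t ∈ K, G t = g t := by
    intro t ht
    have : ¬ ∃ l, t ∈ Ioo (a l) (b l) := by
      rintro ⟨l, hl⟩; exact (hIccsub l hl).2 ht
    simp only [hGdef, dif_neg this]
  have hGψ : ∀ l, ∀ t ∈ Ioo (a l) (b l), G t = deriv (ψ l) t := by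
    intro l t ht
    have h : ∃ l, t ∈ Ioo (a l) (b l) := ⟨l, ht⟩
    have : h.choose = l := huniq h.choose_spec ht
    simp only [hGdef, dif_pos h, this]
  -- metric continuity of g
  have hgδ : ∀ t ∈ K, ∀ η > 0, ∃ δ > 0, ∀ u ∈ K, |u - t| < δ → ‖g u - g t‖ ≤ η := by
    intro t ht η hη
    obtain ⟨δ, hδ, hδ'⟩ := Metric.continuousWithinAt_iff.mp (hgcont t ht) η hη
    exact ⟨δ, hδ, fun u hu hud => by
      rw [← dist_eq_norm]; exact (hδ' hu (by rwa [Real.dist_eq])).le⟩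
  -- bound on ψ' with right endpoint
  have hψcloseb : ∀ l, ∀ u ∈ Icc (a l) (b l), ‖deriv (ψ l) u - g (b l)‖ ≤ 2 * (C * ε l) := by
    intro l u hu
    have h1 := hψclose l u hu
    have h2 : ‖g (a l) - g (b l)‖ ≤ C * ε l := by
      rw [← hψ'b l, norm_sub_rev]
      exact hψclose l (b l) ⟨(hab l).le, le_rfl⟩
    calc ‖deriv (ψ l) u - g (b l)‖ = ‖(deriv (ψ l) u - g (a l)) + (g (a l) - g (b l))‖ := by abel_nf
      _ ≤ ‖deriv (ψ l) u - g (a l)‖ + ‖g (a l) - g (b l)‖ := norm_add_le _ _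
      _ ≤ 2 * (C * ε l) := by linarith
  -- ε l eventually small
  have hεev : ∀ η > 0, ∃ L : ℕ, ∀ l ≥ L, C * ε l ≤ η := by
    intro η hη
    have : Tendsto (fun l => C * ε l) atTop (nhds (C * 0)) := hε.const_mul C
    rw [mul_zero] at this
    exact (this.eventually_le_const hη).exists_forall_of_atTop.imp (fun L hL l hl => (hL l hl))
  -- classification of intervals near a point of K
  have hclass : ∀ t ∈ K, ∀ η > 0, ∃ δ > 0, ∀ l, ∀ s ∈ Ioo (a l) (b l), |s - t| < δ →
      t = a l ∨ t = b l ∨ (C * ε l ≤ η ∧ (t < a l ∨ b l < t)) := by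
    intro t ht η hη
    obtain ⟨L, hL⟩ := hεev η hη
    set S : Set ℕ := {l | l < L ∧ t ∉ Icc (a l) (b l)} with hS
    have hSfin : S.Finite := (Set.finite_Iio L).subset (fun l hl => hl.1)
    set B : Set ℝ := ⋃ l ∈ S, Icc (a l) (b l) with hB
    have hBclosed : IsClosed B := hSfin.isClosed_biUnion (fun l _ => isClosed_Icc)
    have htB : t ∈ Bᶜ := by
      intro hc
      obtain ⟨l, hlS, hlt⟩ := mem_iUnion₂.mp hc
      exact hlS.2 hlt
    obtain ⟨δ, hδpos, hδsub⟩ := Metric.isOpen_iff.mp hBclosed.isOpen_compl t htB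
    refine ⟨δ, hδpos, ?_⟩
    intro l s hs hst
    by_cases h1 : t ∈ Icc (a l) (b l)
    · have hnoo : t ∉ Ioo (a l) (b l) := fun hc => (hIccsub l hc).2 ht
      rcases h1.1.eq_or_lt with h | h
      · exact Or.inl h.symm
      · right; left
        rcases h1.2.eq_or_lt with h' | h'
        · exact h'
        · exact absurd ⟨h, h'⟩ hnoo
    · by_cases h2 : l < L
      · exfalso
        have hsB : s ∈ B := mem_iUnion₂.mpr ⟨l, ⟨h2, h1⟩, Ioo_subset_Icc_self hs⟩
        exact hδsub (by rw [Metric.mem_ball, Real.dist_eq]; exact hst) hsB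
      · right; right
        refine ⟨hL l (le_of_not_gt h2), ?_⟩
        rcases not_and_or.mp (by rwa [mem_Icc] at h1) with h | h
        · exact Or.inl (lt_of_not_ge h)
        · exact Or.inr (lt_of_not_ge h)
  -- derivative of Γ at points of K
  have hderivK : ∀ t ∈ K, HasDerivWithinAt Γ (g t) (Icc m M) t := by
    intro t ht
    rw [hasDerivWithinAt_iff_isLittleO, Asymptotics.isLittleO_iff]
    intro c hc
    set η := c / 3 with hηdef
    have hη : 0 < η := by positivity
    obtain ⟨δ₀, hδ₀pos, hδ₀⟩ := hclass t ht η hη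
    obtain ⟨δ₁, hδ₁pos, hδ₁⟩ := hgδ t ht η hη
    obtain ⟨δ₂, hδ₂pos, hδ₂⟩ : ∃ δ₂ > 0, ∀ x ∈ Icc m M, |x - t| < δ₂ →
        ‖γ x - γ t - (x - t) • g t‖ ≤ η * |x - t| := by
      have hγev := Asymptotics.isLittleO_iff.mp
        (hasDerivWithinAt_iff_isLittleO.mp (hγdiff t ht)) hη
      rw [eventually_nhdsWithin_iff, Metric.eventually_nhds_iff] at hγev
      obtain ⟨δ₂, hp, hδ₂⟩ := hγev
      refine ⟨δ₂, hp, fun x hx hxd => ?_⟩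
      have := hδ₂ (by rwa [Real.dist_eq]) hx
      simpa [Real.norm_eq_abs] using this
    have hE2 : ∃ δ > 0, ∀ s, |s - t| < δ → ∀ l, t = a l →
        ‖ψ l s - ψ l t - (s - t) • g t‖ ≤ η * |s - t| := by
      by_cases hex : ∃ l, t = a l
      · obtain ⟨l₀, hl₀⟩ := hex
        have hd : HasDerivAt (ψ l₀) (g t) t := by
          have := (((hψC1 l₀).differentiable one_ne_zero) t).hasDerivAt
          rwa [hl₀, hψ'a l₀, ← hl₀] at this
        have hev := Asymptotics.isLittleO_iff.mp (hasDerivAt_iff_isLittleO.mp hd) hη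
        rw [Metric.eventually_nhds_iff] at hev
        obtain ⟨δ, hp, hδ⟩ := hev
        refine ⟨δ, hp, fun s hsd l hl => ?_⟩
        have hll : l = l₀ := ha_inj l l₀ (hl.symm.trans hl₀)
        subst hll
        have := hδ (by rwa [Real.dist_eq])
        simpa [Real.norm_eq_abs] using this
      · exact ⟨1, one_pos, fun s _ l hl => absurd ⟨l, hl⟩ hex⟩
    have hE3 : ∃ δ > 0, ∀ s, |s - t| < δ → ∀ l, t = b l →
        ‖ψ l s - ψ l t - (s - t) • g t‖ ≤ η * |s - t| := by
      by_cases hex : ∃ l, t = b l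
      · obtain ⟨l₀, hl₀⟩ := hex
        have hd : HasDerivAt (ψ l₀) (g t) t := by
          have := (((hψC1 l₀).differentiable one_ne_zero) t).hasDerivAt
          rwa [hl₀, hψ'b l₀, ← hl₀] at this
        have hev := Asymptotics.isLittleO_iff.mp (hasDerivAt_iff_isLittleO.mp hd) hη
        rw [Metric.eventually_nhds_iff] at hev
        obtain ⟨δ, hp, hδ⟩ := hev
        refine ⟨δ, hp, fun s hsd l hl => ?_⟩
        have hll : l = l₀ := hb_inj l l₀ (hl.symm.trans hl₀)
        subst hll
        have := hδ (by rwa [Real.dist_eq])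
        simpa [Real.norm_eq_abs] using this
      · exact ⟨1, one_pos, fun s _ l hl => absurd ⟨l, hl⟩ hex⟩
    obtain ⟨δ₃, hδ₃pos, hδ₃⟩ := hE2
    obtain ⟨δ₄, hδ₄pos, hδ₄⟩ := hE3
    set δ := min (min δ₀ δ₁) (min δ₂ (min δ₃ δ₄)) with hδdef
    have hδpos : 0 < δ := by positivity
    have hball : ∀ᶠ s in nhdsWithin t (Icc m M), |s - t| < δ :=
      eventually_nhdsWithin_of_eventually_nhds (by
        rw [Metric.eventually_nhds_iff]
        exact ⟨δ, hδpos, fun y hy => by rwa [Real.dist_eq] at hy⟩)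
    filter_upwards [hball, self_mem_nhdsWithin] with s hsδ hsI
    have hs0 : |s - t| < δ₀ := lt_of_lt_of_le hsδ ((min_le_left _ _).trans (min_le_left _ _))
    have hs1 : |s - t| < δ₁ := lt_of_lt_of_le hsδ ((min_le_left _ _).trans (min_le_right _ _))
    have hs2 : |s - t| < δ₂ := lt_of_lt_of_le hsδ ((min_le_right _ _).trans (min_le_left _ _))
    have hs3 : |s - t| < δ₃ := lt_of_lt_of_le hsδ
      ((min_le_right _ _).trans ((min_le_right _ _).trans (min_le_left _ _)))
    have hs4 : |s - t| < δ₄ := lt_of_lt_of_le hsδ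
      ((min_le_right _ _).trans ((min_le_right _ _).trans (min_le_right _ _)))
    have habs : 0 ≤ |s - t| := abs_nonneg _
    by_cases hsK : s ∈ K
    · rw [hΓK s hsK, hΓK t ht]
      calc ‖γ s - γ t - (s - t) • g t‖ ≤ η * |s - t| := hδ₂ s hsI hs2
        _ ≤ c * ‖s - t‖ := by
          rw [Real.norm_eq_abs]
          exact mul_le_mul_of_nonneg_right (by rw [hηdef]; linarith) habs
    · have hsmem : s ∈ ⋃ l, Ioo (a l) (b l) := hcover ▸ ⟨hsI, hsK⟩
      obtain ⟨l, hsl⟩ := mem_iUnion.mp hsmem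
      rcases hδ₀ l s hsl hs0 with hta | htb | ⟨hCε, hfar⟩
      · have hΓt : Γ t = ψ l t := by rw [hΓK t ht, hta, ← hψa l]
        rw [hΓψ l s hsl, hΓt]
        calc ‖ψ l s - ψ l t - (s - t) • g t‖ ≤ η * |s - t| := hδ₃ s hs3 l hta
          _ ≤ c * ‖s - t‖ := by
            rw [Real.norm_eq_abs]
            exact mul_le_mul_of_nonneg_right (by rw [hηdef]; linarith) habs
      · have hΓt : Γ t = ψ l t := by rw [hΓK t ht, htb, ← hψb l]
        rw [hΓψ l s hsl, hΓt]
        calc ‖ψ l s - ψ l t - (s - t) • g t‖ ≤ η * |s - t| := hδ₄ s hs4 l htb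
          _ ≤ c * ‖s - t‖ := by
            rw [Real.norm_eq_abs]
            exact mul_le_mul_of_nonneg_right (by rw [hηdef]; linarith) habs
      · rcases hfar with hlt | hgt
        · -- t < a l < s
          have hts : t < s := hlt.trans hsl.1
          have hat : |a l - t| = a l - t := abs_of_pos (by linarith)
          have hatst : |a l - t| < |s - t| := by
            rw [hat, abs_of_pos (by linarith)]
            linarith [hsl.1]
          have e1 : ‖ψ l s - ψ l (a l) - (s - a l) • g (a l)‖ ≤ (C * ε l) * (s - a l) :=
            seg_est (ψ l) (hψC1 l) (a l) (b l) (g (a l)) (C * ε l) (hψclose l)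
              (a l) s le_rfl hsl.1.le hsl.2.le
          have e2 : ‖γ (a l) - γ t - (a l - t) • g t‖ ≤ η * |a l - t| :=
            hδ₂ (a l) (hKsub (haK l)) (hatst.trans hs2)
          have e3 : ‖g (a l) - g t‖ ≤ η := hδ₁ (a l) (haK l) (hatst.trans hs1)
          have key : Γ s - Γ t - (s - t) • g t =
              (ψ l s - ψ l (a l) - (s - a l) • g (a l)) +
              (γ (a l) - γ t - (a l - t) • g t) + (s - a l) • (g (a l) - g t) := by
            rw [hΓψ l s hsl, hΓK t ht, ← hψa l]
            module
          have e4 : ‖(s - a l) • (g (a l) - g t)‖ ≤ (s - a l) * η := by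
            rw [norm_smul, Real.norm_eq_abs, abs_of_pos (by linarith [hsl.1])]
            exact mul_le_mul_of_nonneg_left e3 (by linarith [hsl.1])
          rw [key, Real.norm_eq_abs, abs_of_pos (by linarith)]
          rw [hat] at e2
          calc ‖(ψ l s - ψ l (a l) - (s - a l) • g (a l)) +
              (γ (a l) - γ t - (a l - t) • g t) + (s - a l) • (g (a l) - g t)‖
              ≤ ‖ψ l s - ψ l (a l) - (s - a l) • g (a l)‖ +
                ‖γ (a l) - γ t - (a l - t) • g t‖ +
                ‖(s - a l) • (g (a l) - g t)‖ := norm_add₃_le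
            _ ≤ (C * ε l) * (s - a l) + η * (a l - t) + (s - a l) * η := by linarith
            _ ≤ η * (s - a l) + η * (a l - t) + (s - a l) * η := by
                have := mul_le_mul_of_nonneg_right hCε
                  (show (0:ℝ) ≤ s - a l by linarith [hsl.1])
                linarith
            _ = η * ((s - a l) + (a l - t) + (s - a l)) := by ring
            _ ≤ η * (3 * (s - t)) := by
                refine mul_le_mul_of_nonneg_left ?_ hη.le
                have := hsl.1
                linarith
            _ = c * (s - t) := by rw [hηdef]; ring
        · -- s < b l < t
          have hts : s < t := hsl.2.trans hgt
          have hbt : |b l - t| = t - b l := by rw [abs_of_neg (by linarith)]; ring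
          have hbtst : |b l - t| < |s - t| := by
            rw [hbt, abs_of_neg (by linarith)]
            have := hsl.2
            linarith
          have e1 : ‖ψ l (b l) - ψ l s - (b l - s) • g (b l)‖ ≤ (2 * (C * ε l)) * (b l - s) :=
            seg_est (ψ l) (hψC1 l) (a l) (b l) (g (b l)) (2 * (C * ε l)) (hψcloseb l)
              s (b l) hsl.1.le hsl.2.le le_rfl
          have e2 : ‖γ (b l) - γ t - (b l - t) • g t‖ ≤ η * |b l - t| :=
            hδ₂ (b l) (hKsub (hbK l)) (hbtst.trans hs2)
          have e3 : ‖g (b l) - g t‖ ≤ η := hδ₁ (b l) (hbK l) (hbtst.trans hs1)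
          have key : Γ s - Γ t - (s - t) • g t =
              -(ψ l (b l) - ψ l s - (b l - s) • g (b l)) +
              (γ (b l) - γ t - (b l - t) • g t) + (s - b l) • (g (b l) - g t) := by
            rw [hΓψ l s hsl, hΓK t ht, ← hψb l]
            module
          have e4 : ‖(s - b l) • (g (b l) - g t)‖ ≤ (b l - s) * η := by
            rw [norm_smul, Real.norm_eq_abs, abs_of_neg (by linarith [hsl.2]), neg_sub]
            exact mul_le_mul_of_nonneg_left e3 (by linarith [hsl.2])
          rw [key, Real.norm_eq_abs, abs_of_neg (show s - t < 0 by linarith)]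
          rw [hbt] at e2
          calc ‖-(ψ l (b l) - ψ l s - (b l - s) • g (b l)) +
              (γ (b l) - γ t - (b l - t) • g t) + (s - b l) • (g (b l) - g t)‖
              ≤ ‖-(ψ l (b l) - ψ l s - (b l - s) • g (b l))‖ +
                ‖γ (b l) - γ t - (b l - t) • g t‖ +
                ‖(s - b l) • (g (b l) - g t)‖ := norm_add₃_le
            _ = ‖ψ l (b l) - ψ l s - (b l - s) • g (b l)‖ +
                ‖γ (b l) - γ t - (b l - t) • g t‖ +
                ‖(s - b l) • (g (b l) - g t)‖ := by rw [norm_neg]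
            _ ≤ (2 * (C * ε l)) * (b l - s) + η * (t - b l) + (b l - s) * η := by linarith
            _ ≤ (2 * η) * (b l - s) + η * (t - b l) + (b l - s) * η := by
                have := mul_le_mul_of_nonneg_right hCε
                  (show (0:ℝ) ≤ b l - s by linarith [hsl.2])
                linarith
            _ = η * (3 * (b l - s) + (t - b l)) := by ring
            _ ≤ η * (3 * (t - s)) := by
                refine mul_le_mul_of_nonneg_left ?_ hη.le
                have := hsl.2
                linarith
            _ = c * -(s - t) := by rw [hηdef]; ring
  -- derivative of Γ inside the intervals
  have hderivI : ∀ l, ∀ t ∈ Ioo (a l) (b l), HasDerivAt Γ (deriv (ψ l) t) t := by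
    intro l t ht
    have hev : Γ =ᶠ[nhds t] ψ l := by
      filter_upwards [Ioo_mem_nhds ht.1 ht.2] with s hs using hΓψ l s hs
    exact (((hψC1 l).differentiable one_ne_zero) t).hasDerivAt.congr_of_eventuallyEq hev
  -- continuity of G
  have hGcont : ContinuousOn G (Icc m M) := by
    intro t htI
    by_cases ht : t ∈ K
    · rw [ContinuousWithinAt, Metric.tendsto_nhds]
      intro cc hcc
      set η := cc / 4 with hηdef
      have hη : 0 < η := by positivity
      obtain ⟨δ₀, hδ₀pos, hδ₀⟩ := hclass t ht η hη
      obtain ⟨δ₁, hδ₁pos, hδ₁⟩ := hgδ t ht η hη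
      have hE2 : ∃ δ > 0, ∀ s, |s - t| < δ → ∀ l, t = a l →
          ‖deriv (ψ l) s - g t‖ ≤ η := by
        by_cases hex : ∃ l, t = a l
        · obtain ⟨l₀, hl₀⟩ := hex
          have hco : ContinuousAt (deriv (ψ l₀)) t :=
            ((hψC1 l₀).continuous_deriv le_rfl).continuousAt
          have hval : deriv (ψ l₀) t = g t := by rw [hl₀, hψ'a l₀, ← hl₀]
          obtain ⟨δ, hp, hδ⟩ := Metric.continuousAt_iff.mp hco η hη
          refine ⟨δ, hp, fun s hsd l hl => ?_⟩
          have hll : l = l₀ := ha_inj l l₀ (hl.symm.trans hl₀)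
          subst hll
          have := hδ (x := s) (by rwa [Real.dist_eq])
          rw [hval, dist_eq_norm] at this
          exact this.le
        · exact ⟨1, one_pos, fun s _ l hl => absurd ⟨l, hl⟩ hex⟩
      have hE3 : ∃ δ > 0, ∀ s, |s - t| < δ → ∀ l, t = b l →
          ‖deriv (ψ l) s - g t‖ ≤ η := by
        by_cases hex : ∃ l, t = b l
        · obtain ⟨l₀, hl₀⟩ := hex
          have hco : ContinuousAt (deriv (ψ l₀)) t :=
            ((hψC1 l₀).continuous_deriv le_rfl).continuousAt
          have hval : deriv (ψ l₀) t = g t := by rw [hl₀, hψ'b l₀, ← hl₀]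
          obtain ⟨δ, hp, hδ⟩ := Metric.continuousAt_iff.mp hco η hη
          refine ⟨δ, hp, fun s hsd l hl => ?_⟩
          have hll : l = l₀ := hb_inj l l₀ (hl.symm.trans hl₀)
          subst hll
          have := hδ (x := s) (by rwa [Real.dist_eq])
          rw [hval, dist_eq_norm] at this
          exact this.le
        · exact ⟨1, one_pos, fun s _ l hl => absurd ⟨l, hl⟩ hex⟩
      obtain ⟨δ₃, hδ₃pos, hδ₃⟩ := hE2
      obtain ⟨δ₄, hδ₄pos, hδ₄⟩ := hE3
      set δ := min (min δ₀ δ₁) (min δ₃ δ₄) with hδdef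
      have hδpos : 0 < δ := by positivity
      have hball : ∀ᶠ s in nhdsWithin t (Icc m M), |s - t| < δ :=
        eventually_nhdsWithin_of_eventually_nhds (by
          rw [Metric.eventually_nhds_iff]
          exact ⟨δ, hδpos, fun y hy => by rwa [Real.dist_eq] at hy⟩)
      filter_upwards [hball, self_mem_nhdsWithin] with s hsδ hsI
      have hs0 : |s - t| < δ₀ := lt_of_lt_of_le hsδ ((min_le_left _ _).trans (min_le_left _ _))
      have hs1 : |s - t| < δ₁ := lt_of_lt_of_le hsδ ((min_le_left _ _).trans (min_le_right _ _))
      have hs3 : |s - t| < δ₃ := lt_of_lt_of_le hsδ ((min_le_right _ _).trans (min_le_left _ _))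
      have hs4 : |s - t| < δ₄ := lt_of_lt_of_le hsδ ((min_le_right _ _).trans (min_le_right _ _))
      rw [hGK t ht, dist_eq_norm]
      by_cases hsK : s ∈ K
      · rw [hGK s hsK]
        calc ‖g s - g t‖ ≤ η := hδ₁ s hsK hs1
          _ < cc := by rw [hηdef]; linarith
      · have hsmem : s ∈ ⋃ l, Ioo (a l) (b l) := hcover ▸ ⟨hsI, hsK⟩
        obtain ⟨l, hsl⟩ := mem_iUnion.mp hsmem
        rw [hGψ l s hsl]
        rcases hδ₀ l s hsl hs0 with hta | htb | ⟨hCε, hfar⟩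
        · exact (hδ₃ s hs3 l hta).trans_lt (by rw [hηdef]; linarith)
        · exact (hδ₄ s hs4 l htb).trans_lt (by rw [hηdef]; linarith)
        · rcases hfar with hlt | hgt
          · have hts : t < s := hlt.trans hsl.1
            have hatst : |a l - t| < |s - t| := by
              rw [abs_of_pos (by linarith), abs_of_pos (by linarith)]
              linarith [hsl.1]
            have e3 : ‖g (a l) - g t‖ ≤ η := hδ₁ (a l) (haK l) (hatst.trans hs1)
            calc ‖deriv (ψ l) s - g t‖
                ≤ ‖deriv (ψ l) s - g (a l)‖ + ‖g (a l) - g t‖ := by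
                  rw [show deriv (ψ l) s - g t =
                    (deriv (ψ l) s - g (a l)) + (g (a l) - g t) by abel]
                  exact norm_add_le _ _
              _ ≤ C * ε l + η := add_le_add (hψclose l s (Ioo_subset_Icc_self hsl)) e3
              _ ≤ η + η := by linarith
              _ < cc := by rw [hηdef]; linarith
          · have hts : s < t := hsl.2.trans hgt
            have hbtst : |b l - t| < |s - t| := by
              rw [abs_of_neg (by linarith), abs_of_neg (by linarith)]
              have := hsl.2
              linarith
            have e3 : ‖g (b l) - g t‖ ≤ η := hδ₁ (b l) (hbK l) (hbtst.trans hs1)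
            calc ‖deriv (ψ l) s - g t‖
                ≤ ‖deriv (ψ l) s - g (b l)‖ + ‖g (b l) - g t‖ := by
                  rw [show deriv (ψ l) s - g t =
                    (deriv (ψ l) s - g (b l)) + (g (b l) - g t) by abel]
                  exact norm_add_le _ _
              _ ≤ 2 * (C * ε l) + η := add_le_add (hψcloseb l s (Ioo_subset_Icc_self hsl)) e3
              _ ≤ 2 * η + η := by linarith
              _ < cc := by rw [hηdef]; linarith
    · have hsmem : t ∈ ⋃ l, Ioo (a l) (b l) := hcover ▸ ⟨htI, ht⟩
      obtain ⟨l, hl⟩ := mem_iUnion.mp hsmem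
      have hev : deriv (ψ l) =ᶠ[nhds t] G := by
        filter_upwards [Ioo_mem_nhds hl.1 hl.2] with s hs using (hGψ l s hs).symm
      exact ((((hψC1 l).continuous_deriv le_rfl).continuousAt).congr hev).continuousWithinAt
  refine ⟨G, hGcont, ?_, hGK, hGψ⟩
  intro t ht
  by_cases htK : t ∈ K
  · rw [hGK t htK]; exact hderivK t htK
  · have : t ∈ ⋃ l, Ioo (a l) (b l) := hcover ▸ ⟨ht, htK⟩
    obtain ⟨l, hl⟩ := mem_iUnion.mp this
    rw [hGψ l t hl]
    exact (hderivI l t hl).hasDerivWithinAt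
end
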